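/- Uniqueness of the invariant distribution for countable Markov chains: Let P = (p_{ij}) be an irreducible, positive recurrent stochastic matrix on a countable state space S. Then there is at most one probability measure π on S with πP = π; moreover π equals the cycle measure π^{(b)}(a) = E_b[Σ_{n=0}^{𝔱_b−1} 1(X_n = a)]/E_b[𝔱_b] for any fixed state b, where 𝔱_b is the first return time to b. -/

import Mathlib

open scoped ENNReal Classical
noncomputable section

/-- `n`-step transition probabilities of the stochastic matrix `p`. -/
def pPow {S : Type*} (p : S → S → ℝ≥0∞) : ℕ → S → S → ℝ≥0∞
  | 0, i, j => if i = j then 1 else 0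
  | n + 1, i, j => ∑' k, pPow p n i k * p k j

/-- `i` and `j` communicate. -/
def Communicates {S : Type*} (p : S → S → ℝ≥0∞) (i j : S) : Prop :=
  (∃ n, 0 < pPow p n i j) ∧ (∃ n, 0 < pPow p n j i)

/-- `taboo p b n j = P_b(X_n = j, X_1 ≠ b, …, X_n ≠ b) = P_b(X_n = j, 𝔱_b > n)`. -/
def taboo {S : Type*} (p : S → S → ℝ≥0∞) (b : S) : ℕ → S → ℝ≥0∞
  | 0, j => if j = b then 1 else 0
  | n + 1, j => if j = b then 0 else ∑' i, taboo p b n i * p i j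

/-- `E_b[Σ_{n=0}^{𝔱_b−1} 1(X_n = a)]`. -/
def cycNum {S : Type*} (p : S → S → ℝ≥0∞) (b a : S) : ℝ≥0∞ := ∑' n, taboo p b n a

/-- `E_b[𝔱_b] = Σ_n P_b(𝔱_b > n)`. -/
def meanRet {S : Type*} (p : S → S → ℝ≥0∞) (b : S) : ℝ≥0∞ := ∑' n, ∑' j, taboo p b n j

/-- The cycle (occupation) measure `π^{(b)}`. -/
def cyc {S : Type*} (p : S → S → ℝ≥0∞) (b a : S) : ℝ≥0∞ := cycNum p b a / meanRet p b

section aux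

variable {S : Type*} (p : S → S → ℝ≥0∞) (b : S)

lemma taboo_zero (j : S) : taboo p b 0 j = if j = b then 1 else 0 := rfl

lemma taboo_succ (n : ℕ) (j : S) :
    taboo p b (n + 1) j = if j = b then 0 else ∑' i, taboo p b n i * p i j := rfl

lemma taboo_succ_self (n : ℕ) : taboo p b (n + 1) b = 0 := by
  rw [taboo_succ]; simp

lemma cycNum_self : cycNum p b b = 1 := by
  unfold cycNum
  rw [tsum_eq_single 0]
  · rw [taboo_zero]; simp
  · intro n hn
    cases n with
    | zero => exact absurd rfl hn
    | succ m => exact taboo_succ_self p b m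

lemma taboo_zero_sum : ∑' j, taboo p b 0 j = 1 := by
  rw [tsum_congr (taboo_zero p b)]
  exact tsum_ite_eq b 1

lemma pPow_row (hstoch : ∀ i, ∑' j, p i j = 1) : ∀ n i, ∑' j, pPow p n i j = 1 := by
  intro n
  induction n with
  | zero =>
    intro i
    have h : ∀ j, pPow p 0 i j = if j = i then 1 else 0 := by
      intro j
      show (if i = j then (1 : ℝ≥0∞) else 0) = _
      by_cases h : i = j
      · simp [h]
      · rw [if_neg h, if_neg fun he => h he.symm]
    rw [tsum_congr h]
    exact tsum_ite_eq i 1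
  | succ n ih =>
    intro i
    show ∑' j, ∑' k, pPow p n i k * p k j = 1
    rw [ENNReal.tsum_comm]
    calc ∑' k, ∑' j, pPow p n i k * p k j
        = ∑' k, pPow p n i k * ∑' j, p k j := tsum_congr fun k => ENNReal.tsum_mul_left
      _ = ∑' k, pPow p n i k := by
          refine tsum_congr fun k => ?_
          rw [hstoch k, mul_one]
      _ = 1 := ih i

lemma pPow_le_one (hstoch : ∀ i, ∑' j, p i j = 1) (n : ℕ) (i j : S) :
    pPow p n i j ≤ 1 := by
  calc pPow p n i j ≤ ∑' j, pPow p n i j := ENNReal.le_tsum j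
    _ = 1 := pPow_row p hstoch n i

lemma inv_pPow (μ : S → ℝ≥0∞) (hinv : ∀ j, μ j = ∑' i, μ i * p i j) :
    ∀ n j, μ j = ∑' i, μ i * pPow p n i j := by
  intro n
  induction n with
  | zero =>
    intro j
    have h : ∀ i, μ i * pPow p 0 i j = if i = j then μ j else 0 := by
      intro i
      show μ i * (if i = j then 1 else 0) = _
      by_cases h : i = j
      · simp [h]
      · simp [h]
    rw [tsum_congr h, tsum_ite_eq j (fun _ => μ j)]
  | succ n ih =>
    intro j
    calc μ j = ∑' k, μ k * p k j := hinv j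
      _ = ∑' k, (∑' i, μ i * pPow p n i k) * p k j := tsum_congr fun k => by rw [← ih k]
      _ = ∑' k, ∑' i, μ i * pPow p n i k * p k j :=
          tsum_congr fun k => ENNReal.tsum_mul_right.symm
      _ = ∑' i, ∑' k, μ i * pPow p n i k * p k j := ENNReal.tsum_comm
      _ = ∑' i, μ i * ∑' k, pPow p n i k * p k j := by
          refine tsum_congr fun i => ?_
          rw [← ENNReal.tsum_mul_left]
          exact tsum_congr fun k => by ring
      _ = ∑' i, μ i * pPow p (n + 1) i j := rfl

/-- subtraction under `tsum` in `ℝ≥0∞`. -/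
lemma tsum_sub' {f g : S → ℝ≥0∞} (hfin : ∑' i, g i ≠ ⊤) (hle : ∀ i, g i ≤ f i) :
    ∑' i, (f i - g i) = (∑' i, f i) - ∑' i, g i := by
  refine ENNReal.eq_sub_of_add_eq hfin ?_
  rw [← ENNReal.tsum_add]
  exact tsum_congr fun i => tsub_add_cancel_of_le (hle i)

end aux

theorem markov_invariant_unique {S : Type*} [Countable S] (p : S → S → ℝ≥0∞)
    (hstoch : ∀ i, ∑' j, p i j = 1)
    (hirr : ∀ i j, Communicates p i j)
    (hposrec : ∀ b, meanRet p b < ⊤)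
    (π : S → ℝ≥0∞) (hπ1 : ∑' a, π a = 1)
    (hπinv : ∀ j, π j = ∑' i, π i * p i j) :
    ∀ b a, π a = cyc p b a := by
  intro b a
  -- notation: t n = P_b(return time > n), r n = P_b(return time = n+1)
  set t : ℕ → ℝ≥0∞ := fun n => ∑' j, taboo p b n j with ht
  set r : ℕ → ℝ≥0∞ := fun n => ∑' i, taboo p b n i * p i b with hr
  have key : ∀ n, t (n + 1) + r n = t n := by
    intro n
    have h1 : ∀ j, taboo p b (n + 1) j + (if j = b then r n else 0)
        = ∑' i, taboo p b n i * p i j := by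
      intro j
      rw [taboo_succ]
      by_cases h : j = b
      · subst h; simp [hr]
      · simp [h]
    calc t (n + 1) + r n
        = (∑' j, taboo p b (n + 1) j) + ∑' j, (if j = b then r n else 0) := by
          rw [tsum_ite_eq b (fun _ => r n)]
      _ = ∑' j, (taboo p b (n + 1) j + if j = b then r n else 0) := (ENNReal.tsum_add).symm
      _ = ∑' j, ∑' i, taboo p b n i * p i j := tsum_congr h1
      _ = ∑' i, ∑' j, taboo p b n i * p i j := ENNReal.tsum_comm
      _ = ∑' i, taboo p b n i * ∑' j, p i j := tsum_congr fun i => ENNReal.tsum_mul_left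
      _ = t n := tsum_congr fun i => by rw [hstoch i, mul_one]
  have t0 : t 0 = 1 := taboo_zero_sum p b
  have partial_sum : ∀ N, (∑ n ∈ Finset.range N, r n) + t N = 1 := by
    intro N
    induction N with
    | zero => simpa using t0
    | succ N ih =>
      rw [Finset.sum_range_succ]
      calc (∑ n ∈ Finset.range N, r n) + r N + t (N + 1)
          = (∑ n ∈ Finset.range N, r n) + (t (N + 1) + r N) := by ring
        _ = (∑ n ∈ Finset.range N, r n) + t N := by rw [key N]
        _ = 1 := ih
  have hMfin : meanRet p b ≠ ⊤ := (hposrec b).ne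
  have hinf_t : ⨅ n, t n = 0 := by
    by_contra h
    have hc : ∀ n, ⨅ m, t m ≤ t n := fun n => iInf_le _ n
    have : (⊤ : ℝ≥0∞) ≤ meanRet p b := by
      calc (⊤ : ℝ≥0∞) = ∑' _ : ℕ, ⨅ m, t m := (ENNReal.tsum_const_eq_top_of_ne_zero h).symm
        _ ≤ ∑' n, t n := ENNReal.tsum_le_tsum hc
        _ = meanRet p b := rfl
    exact hMfin (top_le_iff.mp this)
  have r_total : ∑' n, r n = 1 := by
    apply le_antisymm
    · rw [ENNReal.tsum_eq_iSup_nat]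
      refine iSup_le fun N => ?_
      calc ∑ n ∈ Finset.range N, r n ≤ (∑ n ∈ Finset.range N, r n) + t N := le_self_add
        _ = 1 := partial_sum N
    · have h1 : ∀ N, (1 : ℝ≥0∞) ≤ (∑' n, r n) + t N := by
        intro N
        rw [← partial_sum N]
        exact add_le_add_left (ENNReal.sum_le_tsum _) _
      calc (1 : ℝ≥0∞) ≤ ⨅ N, ((∑' n, r n) + t N) := le_iInf h1
        _ = (∑' n, r n) + ⨅ N, t N := ENNReal.add_iInf.symm
        _ = ∑' n, r n := by rw [hinf_t, add_zero]
  -- invariance of cycNum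
  have cyc_swap : ∀ j, (∑' i, cycNum p b i * p i j) = ∑' n, ∑' i, taboo p b n i * p i j := by
    intro j
    unfold cycNum
    calc ∑' i, (∑' n, taboo p b n i) * p i j
        = ∑' i, ∑' n, taboo p b n i * p i j := tsum_congr fun i => ENNReal.tsum_mul_right.symm
      _ = ∑' n, ∑' i, taboo p b n i * p i j := ENNReal.tsum_comm
  have cycinv : ∀ j, cycNum p b j = ∑' i, cycNum p b i * p i j := by
    intro j
    rw [cyc_swap]
    by_cases h : j = b
    · rw [h, show (∑' n, ∑' i, taboo p b n i * p i b) = ∑' n, r n from rfl, r_total,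
        cycNum_self]
    · have hshift : ∀ n, (∑' i, taboo p b n i * p i j) = taboo p b (n + 1) j := by
        intro n; rw [taboo_succ]; simp [h]
      rw [tsum_congr hshift]
      unfold cycNum
      rw [tsum_eq_zero_add' (f := fun n => taboo p b n j) ENNReal.summable]
      rw [taboo_zero]
      simp [h]
  -- minimality: π b * cycNum ≤ π
  have hπle1 : ∀ a, π a ≤ 1 := fun a => le_of_le_of_eq (ENNReal.le_tsum a) hπ1
  have minim_fin : ∀ N a, π b * (∑ n ∈ Finset.range N, taboo p b n a) ≤ π a := by
    intro N
    induction N with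
    | zero => simp
    | succ N ih =>
      intro a
      by_cases h : a = b
      · rw [h]
        have hsum : (∑ n ∈ Finset.range (N + 1), taboo p b n b) = 1 := by
          rw [Finset.sum_range_succ']
          simp only [taboo_succ_self]
          rw [taboo_zero]
          simp
        rw [hsum, mul_one]
      · calc π b * ∑ n ∈ Finset.range (N + 1), taboo p b n a
            = π b * ∑ n ∈ Finset.range N, taboo p b (n + 1) a := by
              rw [Finset.sum_range_succ', taboo_zero]
              simp [h]
          _ = ∑ n ∈ Finset.range N, π b * ∑' i, taboo p b n i * p i a := by
              rw [Finset.mul_sum]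
              refine Finset.sum_congr rfl fun n _ => ?_
              rw [taboo_succ]; simp [h]
          _ = ∑ n ∈ Finset.range N, ∑' i, π b * taboo p b n i * p i a := by
              refine Finset.sum_congr rfl fun n _ => ?_
              rw [← ENNReal.tsum_mul_left]
              exact tsum_congr fun i => by ring
          _ = ∑' i, ∑ n ∈ Finset.range N, π b * taboo p b n i * p i a := by
              rw [Summable.tsum_finsetSum fun n _ => ENNReal.summable]
          _ = ∑' i, (π b * ∑ n ∈ Finset.range N, taboo p b n i) * p i a := by
              refine tsum_congr fun i => ?_
              rw [Finset.mul_sum, Finset.sum_mul]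
          _ ≤ ∑' i, π i * p i a :=
              ENNReal.tsum_le_tsum fun i => mul_le_mul_left (ih i) _
          _ = π a := (hπinv a).symm
  have minim : ∀ a, π b * cycNum p b a ≤ π a := by
    intro a
    unfold cycNum
    rw [ENNReal.tsum_eq_iSup_nat, ENNReal.mul_iSup]
    exact iSup_le fun N => minim_fin N a
  -- μ = π b * cycNum is invariant
  have hμinv : ∀ j, π b * cycNum p b j = ∑' i, π b * cycNum p b i * p i j := by
    intro j
    calc π b * cycNum p b j = π b * ∑' i, cycNum p b i * p i j := by rw [← cycinv j]
      _ = ∑' i, π b * (cycNum p b i * p i j) := ENNReal.tsum_mul_left.symm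
      _ = ∑' i, π b * cycNum p b i * p i j := tsum_congr fun i => by ring
  have hμle : ∀ i, π b * cycNum p b i ≤ π i := minim
  have hμb : π b * cycNum p b b = π b := by rw [cycNum_self, mul_one]
  -- π ≤ μ via irreducibility
  have hπeq : ∀ c, π c = π b * cycNum p b c := by
    intro c
    refine le_antisymm ?_ (hμle c)
    obtain ⟨n, hn⟩ := (hirr c b).1
    have h1 := inv_pPow p π hπinv n b
    have h2 : π b * cycNum p b b = ∑' i, π b * cycNum p b i * pPow p n i b :=
      inv_pPow p (fun a => π b * cycNum p b a) hμinv n b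
    have hμfin : (∑' i, π b * cycNum p b i * pPow p n i b) ≠ ⊤ := by
      rw [← h2, hμb]
      exact (lt_of_le_of_lt (hπle1 b) ENNReal.one_lt_top).ne
    have hsub : ∑' i, (π i - π b * cycNum p b i) * pPow p n i b = 0 := by
      have e1 : ∀ i, (π i - π b * cycNum p b i) * pPow p n i b
          = π i * pPow p n i b - π b * cycNum p b i * pPow p n i b := fun i =>
        ENNReal.sub_mul fun _ _ =>
          (lt_of_le_of_lt (pPow_le_one p hstoch n i b) ENNReal.one_lt_top).ne
      rw [tsum_congr e1, tsum_sub' hμfin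
        (fun i => mul_le_mul_left (hμle i) _), ← h1, ← h2, hμb, tsub_self]
    have hc := ENNReal.tsum_eq_zero.mp hsub c
    rcases mul_eq_zero.mp hc with h | h
    · exact tsub_eq_zero_iff_le.mp h
    · exact absurd h hn.ne'
  -- total mass identity
  have hMsum : meanRet p b = ∑' a, cycNum p b a := by
    unfold meanRet cycNum
    exact ENNReal.tsum_comm
  have hmass : π b * meanRet p b = 1 := by
    calc π b * meanRet p b = ∑' c, π b * cycNum p b c := by
          rw [hMsum, ENNReal.tsum_mul_left]
      _ = ∑' c, π c := tsum_congr fun c => (hπeq c).symm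
      _ = 1 := hπ1
  have hM0 : meanRet p b ≠ 0 := by
    intro h
    rw [h, mul_zero] at hmass
    exact zero_ne_one hmass
  have hπb : π b = (meanRet p b)⁻¹ := by
    calc π b = π b * (meanRet p b * (meanRet p b)⁻¹) := by
          rw [ENNReal.mul_inv_cancel hM0 hMfin, mul_one]
      _ = π b * meanRet p b * (meanRet p b)⁻¹ := by ring
      _ = (meanRet p b)⁻¹ := by rw [hmass, one_mul]
  rw [hπeq a, hπb, cyc, div_eq_mul_inv, mul_comm]

end
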